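/- Let A be a positive contraction on a complex Hilbert space H (0 ≤ A ≤ I). Then for all x, y ∈ H, |⟨Ax,y⟩| ≤ (‖x‖‖y‖ + |⟨x,y⟩|)/2. -/

import Mathlib

open scoped InnerProductSpace

set_option synthInstance.maxHeartbeats 1000000
set_option maxHeartbeats 1000000

theorem contraction_buzano {H : Type*} [NormedAddCommGroup H]
    [InnerProductSpace ℂ H] [CompleteSpace H] (A : H →L[ℂ] H)
    (hA : A.IsPositive) (hA1 : ((1 : H →L[ℂ] H) - A).IsPositive) (x y : H) :
    ‖⟪A x, y⟫_ℂ‖ ≤ (‖x‖ * ‖y‖ + ‖⟪x, y⟫_ℂ‖) / 2 := by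
  have hApos : (0 : H →L[ℂ] H) ≤ A := (ContinuousLinearMap.nonneg_iff_isPositive A).mpr hA
  have hAle : A ≤ 1 := by
    have h := (ContinuousLinearMap.nonneg_iff_isPositive (1 - A)).mpr hA1
    exact sub_nonneg.mp h
  set s := CFC.sqrt A with hsdef
  have hsnn : (0 : H →L[ℂ] H) ≤ s := CFC.sqrt_nonneg (a := A)
  have hss : s * s = A := CFC.sqrt_mul_sqrt_self A hApos
  have hstar : star s = s := IsSelfAdjoint.of_nonneg hsnn
  have hconj : star s * A * s ≤ star s * 1 * s := star_left_conjugate_le_conjugate hAle s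
  rw [hstar, mul_one, hss] at hconj
  have hAA : A * A ≤ A := by
    calc A * A = s * A * s := by rw [← hss]; noncomm_ring
    _ ≤ A := hconj
  have hP : (A - A * A).IsPositive :=
    (ContinuousLinearMap.nonneg_iff_isPositive _).mp (sub_nonneg.mpr hAA)
  have hsym : ∀ u v : H, ⟪A u, v⟫_ℂ = ⟪u, A v⟫_ℂ := fun u v => hA.1 u v
  have hre : ∀ z : ℂ, RCLike.re z = z.re := fun z => rfl
  -- key contraction estimate: ‖2 A x - x‖ ≤ ‖x‖
  have key : ‖(2 : ℂ) • A x - x‖ ≤ ‖x‖ := by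
    have hsq : ‖(2 : ℂ) • A x - x‖ ^ 2 ≤ ‖x‖ ^ 2 := by
      have h1 : (‖(2 : ℂ) • A x - x‖ : ℝ) ^ 2 =
          (⟪(2 : ℂ) • A x - x, (2 : ℂ) • A x - x⟫_ℂ).re := by
        rw [← inner_self_eq_norm_sq (𝕜 := ℂ), hre]
      have h2 : (‖x‖ : ℝ) ^ 2 = (⟪x, x⟫_ℂ).re := by
        rw [← inner_self_eq_norm_sq (𝕜 := ℂ), hre]
      rw [h1, h2]
      have expand : ⟪(2 : ℂ) • A x - x, (2 : ℂ) • A x - x⟫_ℂ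
          = ⟪x, x⟫_ℂ - (4 : ℂ) * ⟪(A - A * A) x, x⟫_ℂ := by
        have e1 : ⟪A x, A x⟫_ℂ = ⟪A (A x), x⟫_ℂ := (hsym (A x) x).symm
        have e2 : ⟪x, A x⟫_ℂ = ⟪A x, x⟫_ℂ := (hsym x x).symm
        simp only [inner_sub_left, inner_sub_right, inner_smul_left, inner_smul_right,
          ContinuousLinearMap.sub_apply, ContinuousLinearMap.mul_apply, map_ofNat]
        rw [e1, e2]
        ring
      rw [expand]
      have hnn : 0 ≤ (⟪(A - A * A) x, x⟫_ℂ).re := by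
        rw [← hre]; exact (Complex.nonneg_iff.mp (hP.inner_nonneg_left x)).1
      have him : (⟪(A - A * A) x, x⟫_ℂ).im = 0 := by
        have hsy := hP.1
        have hc : (starRingEnd ℂ) ⟪(A - A * A) x, x⟫_ℂ = ⟪(A - A * A) x, x⟫_ℂ := by
          rw [inner_conj_symm]; exact (hsy x x).symm
        exact Complex.conj_eq_iff_im.mp hc
      have hrw : (⟪x, x⟫_ℂ - (4 : ℂ) * ⟪(A - A * A) x, x⟫_ℂ).re
          = (⟪x, x⟫_ℂ).re - 4 * (⟪(A - A * A) x, x⟫_ℂ).re := by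
        simp [Complex.sub_re, Complex.mul_re, him]
      rw [hrw]
      linarith
    have h0 : (0 : ℝ) ≤ ‖x‖ := norm_nonneg x
    nlinarith [norm_nonneg ((2 : ℂ) • A x - x)]
  -- final computation
  have hdecomp : ⟪A x, y⟫_ℂ = (⟪(2 : ℂ) • A x - x, y⟫_ℂ + ⟪x, y⟫_ℂ) / 2 := by
    rw [inner_sub_left, inner_smul_left, map_ofNat]
    ring
  rw [hdecomp]
  calc ‖(⟪(2 : ℂ) • A x - x, y⟫_ℂ + ⟪x, y⟫_ℂ) / 2‖
      ≤ (‖⟪(2 : ℂ) • A x - x, y⟫_ℂ‖ + ‖⟪x, y⟫_ℂ‖) / 2 := by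
        rw [norm_div]
        simp only [Complex.norm_ofNat]
        gcongr
        exact norm_add_le _ _
    _ ≤ (‖x‖ * ‖y‖ + ‖⟪x, y⟫_ℂ‖) / 2 := by
        gcongr
        calc ‖⟪(2 : ℂ) • A x - x, y⟫_ℂ‖ ≤ ‖(2 : ℂ) • A x - x‖ * ‖y‖ :=
              norm_inner_le_norm _ _
          _ ≤ ‖x‖ * ‖y‖ := by gcongr
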